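/- Let d ≥ 1 and r = (r_0,…,r_{d-1}) ∈ ℝ^d. If every complex root of χ_r(X) = X^d + r_{d-1}X^{d-1} + ⋯ + r_0 has modulus strictly less than 1 (i.e., r ∈ E_d), then r ∈ D_d: for every z ∈ ℤ^d the orbit (τ_r^k(z))_{k≥0} is ultimately periodic, i.e., there exist k ∈ ℕ and l ≥ 1 with τ_r^{k+l}(z) = τ_r^k(z). -/

import Mathlib

open Polynomial

lemma contractBound (μ : ℂ) (hμ : ‖μ‖ < 1) (x : ℕ → ℂ) (B : ℝ)
    (h : ∀ n, ‖x (n+1) - μ * x n‖ ≤ B) :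
    ∀ n, ‖x n‖ ≤ max (‖x 0‖) (B / (1 - ‖μ‖)) := by
  intro n
  set M := max (‖x 0‖) (B / (1 - ‖μ‖)) with hM
  have hpos : 0 < 1 - ‖μ‖ := by linarith
  have hBM : B ≤ (1 - ‖μ‖) * M := by
    have := le_max_right (‖x 0‖) (B / (1 - ‖μ‖))
    rw [div_le_iff₀ hpos] at this
    linarith [this]
  induction n with
  | zero => exact le_max_left _ _
  | succ n ih =>
    have h1 : ‖x (n+1)‖ ≤ ‖μ‖ * ‖x n‖ + B := by
      calc ‖x (n+1)‖ = ‖μ * x n + (x (n+1) - μ * x n)‖ := by ring_nf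
        _ ≤ ‖μ * x n‖ + ‖x (n+1) - μ * x n‖ := norm_add_le _ _
        _ ≤ ‖μ‖ * ‖x n‖ + B := by rw [norm_mul]; exact add_le_add le_rfl (h n)
    have habs : (0:ℝ) ≤ ‖μ‖ := norm_nonneg μ
    nlinarith [ih]

lemma combBound : ∀ (k : ℕ) (p : ℂ[X]), p.Monic → p.natDegree = k →
    (∀ μ, p.IsRoot μ → ‖μ‖ < 1) →
    ∀ (N : ℕ), p.natDegree < N → ∀ (x : ℕ → ℂ) (B : ℝ),
    (∀ n, ‖∑ i ∈ Finset.range N, p.coeff i * x (n+i)‖ ≤ B) →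
    ∃ C, ∀ n, ‖x n‖ ≤ C := by
  intro k
  induction k with
  | zero =>
    intro p hm hk hr N hN x B h
    have hp1 : p = 1 := hm.natDegree_eq_zero.mp hk
    refine ⟨B, fun n => ?_⟩
    have := h n
    rw [hp1] at this
    obtain ⟨M, hNM⟩ : ∃ M, N = M + 1 := ⟨N - 1, by omega⟩
    rw [hNM, Finset.sum_range_succ'] at this
    simpa [coeff_one] using this
  | succ k ih =>
    intro p hm hk hr N hN x B h
    obtain ⟨μ, hμ⟩ : ∃ μ, p.IsRoot μ := Complex.exists_root (by
      rw [← natDegree_pos_iff_degree_pos]; omega)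
    obtain ⟨q, hq⟩ : (X - C μ) ∣ p := dvd_iff_isRoot.mpr hμ
    have hqm : q.Monic := (monic_X_sub_C μ).of_mul_monic_left (hq ▸ hm)
    have hdeg : q.natDegree = k := by
      have := natDegree_mul (X_sub_C_ne_zero μ) hqm.ne_zero
      rw [← hq, natDegree_X_sub_C] at this
      omega
    obtain ⟨M, hNM⟩ : ∃ M, N = M + 1 := ⟨N - 1, by omega⟩
    have hMk : k < M := by omega
    set y : ℕ → ℂ := fun n => ∑ i ∈ Finset.range M, q.coeff i * x (n+i) with hy
    have key : ∀ n, ∑ i ∈ Finset.range N, p.coeff i * x (n+i) = y (n+1) - μ * y n := by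
      intro n
      have hco : ∀ i, p.coeff i = (X * q).coeff i - μ * q.coeff i := by
        intro i
        rw [hq]
        rw [sub_mul, coeff_sub, coeff_C_mul]
      calc ∑ i ∈ Finset.range N, p.coeff i * x (n+i)
          = ∑ i ∈ Finset.range N, ((X*q).coeff i * x (n+i) - μ * (q.coeff i * x (n+i))) := by
            refine Finset.sum_congr rfl fun i _ => ?_; rw [hco i]; ring
        _ = (∑ i ∈ Finset.range N, (X*q).coeff i * x (n+i))
            - μ * ∑ i ∈ Finset.range N, q.coeff i * x (n+i) := by
            rw [Finset.sum_sub_distrib, Finset.mul_sum]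
        _ = y (n+1) - μ * y n := by
            congr 1
            · rw [hNM, Finset.sum_range_succ']
              simp only [coeff_X_mul]
              have : (X * q).coeff 0 = 0 := by simp [coeff_X_mul_zero]
              rw [this, zero_mul, add_zero, hy]
              refine Finset.sum_congr rfl fun i _ => ?_
              have hni : n + (i+1) = n + 1 + i := by omega
              rw [hni]
            · congr 1
              rw [hNM, Finset.sum_range_succ, hy]
              have : q.coeff M = 0 := coeff_eq_zero_of_natDegree_lt (by rw [hdeg]; exact hMk)
              rw [this, zero_mul, add_zero]
    have hμ1 : ‖μ‖ < 1 := hr μ hμ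
    have hyb : ∀ n, ‖y (n+1) - μ * y n‖ ≤ B := fun n => by
      rw [← key n]; exact h n
    have hybdd := contractBound μ hμ1 y B hyb
    refine ih q hqm hdeg (fun ν hν => hr ν ?_) M (by omega) x _ hybdd
    rw [IsRoot, hq, eval_mul, hν.eq_zero, mul_zero]

/-- The shift radix system `τ_r : ℤ^d → ℤ^d`. -/
noncomputable def srsMap (d : ℕ) (r : Fin d → ℝ) (z : Fin d → ℤ) : Fin d → ℤ :=
  fun i =>
    if h : (i : ℕ) + 1 < d then z ⟨(i : ℕ) + 1, h⟩
    else -⌊∑ j, r j * (z j : ℝ)⌋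

/-- `E_d ⊆ D_d`: if every complex root of
`χ_r(X) = X^d + r_{d-1}X^{d-1} + ⋯ + r_0` has modulus `< 1`, then every orbit of `τ_r`
is ultimately periodic. -/
theorem schurCohn_subset_Dd (d : ℕ) (hd : 1 ≤ d) (r : Fin d → ℝ)
    (hroots : ∀ μ : ℂ,
        (X ^ d + ∑ i : Fin d, C ((r i : ℂ)) * X ^ (i : ℕ)).IsRoot μ → ‖μ‖ < 1) :
    ∀ z : Fin d → ℤ, ∃ k l : ℕ, 1 ≤ l ∧ (srsMap d r)^[k + l] z = (srsMap d r)^[k] z := by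
  intro z
  have hd0 : 0 < d := hd
  set τ := srsMap d r with hτ
  set s : ℕ → ℤ := fun n => (τ^[n] z) ⟨0, hd0⟩ with hs
  -- components of the orbit
  have comp : ∀ i (n : ℕ) (h : i < d), (τ^[n] z) ⟨i, h⟩ = s (n + i) := by
    intro i
    induction i with
    | zero => intro n h; simp [hs]
    | succ i ihi =>
      intro n h
      have hi : i < d := by omega
      have step : (τ^[n+1] z) ⟨i, hi⟩ = (τ^[n] z) ⟨i+1, h⟩ := by
        rw [Function.iterate_succ_apply']
        show srsMap d r (τ^[n] z) ⟨i, hi⟩ = _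
        unfold srsMap
        simp only []
        rw [dif_pos h]
      have := ihi (n+1) hi
      rw [step] at this
      rw [this]
      congr 1
      omega
  -- the recurrence
  have recur : ∀ n : ℕ, s (n + d) = -⌊∑ j : Fin d, r j * ((s (n + j) : ℤ) : ℝ)⌋ := by
    intro n
    have h1 : (τ^[n+1] z) ⟨d-1, by omega⟩ = s (n + d) := by
      rw [comp (d-1) (n+1) (by omega)]
      congr 1
      omega
    rw [← h1, Function.iterate_succ_apply']
    show srsMap d r (τ^[n] z) ⟨d-1, by omega⟩ = _
    unfold srsMap
    simp only []
    rw [dif_neg (by omega)]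
    have hw : ∀ j : Fin d, (τ^[n] z) j = s (n + j) := fun j => comp j.1 n j.2
    simp only [hw]
  -- the polynomial
  set p : ℂ[X] := X ^ d + ∑ i : Fin d, C ((r i : ℂ)) * X ^ (i : ℕ) with hp
  set q : ℂ[X] := ∑ i : Fin d, C ((r i : ℂ)) * X ^ (i : ℕ) with hq
  have hqco : ∀ j : ℕ, q.coeff j = if h : j < d then ((r ⟨j, h⟩ : ℝ) : ℂ) else 0 := by
    intro j
    rw [hq, finset_sum_coeff]
    simp only [coeff_C_mul, coeff_X_pow]
    by_cases h : j < d
    · rw [dif_pos h]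
      rw [Finset.sum_eq_single (⟨j, h⟩ : Fin d)]
      · simp
      · intro b _ hb
        have : j ≠ (b : ℕ) := fun hc => hb (by exact Fin.ext hc.symm)
        simp [this]
      · simp
    · rw [dif_neg h]
      apply Finset.sum_eq_zero
      intro b _
      have : j ≠ (b : ℕ) := by have := b.2; omega
      simp [this]
  have hpco : ∀ j : ℕ, p.coeff j =
      if j = d then 1 else (if h : j < d then ((r ⟨j, h⟩ : ℝ) : ℂ) else 0) := by
    intro j
    rw [hp, coeff_add, coeff_X_pow, hqco j]
    by_cases h : j = d
    · rw [if_pos h, if_pos h, dif_neg (by omega), add_zero]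
    · rw [if_neg h, if_neg h, zero_add]
  have hpdeg : p.natDegree = d := by
    have hle : p.natDegree ≤ d := natDegree_le_iff_coeff_eq_zero.mpr (fun m hm => by
      rw [hpco m, if_neg (by omega), dif_neg (by omega)])
    have hge : d ≤ p.natDegree := le_natDegree_of_ne_zero (by
      rw [hpco d, if_pos rfl]; exact one_ne_zero)
    omega
  have hpm : p.Monic := by
    rw [Monic, leadingCoeff, hpdeg, hpco d, if_pos rfl]
  -- the bounded combination
  set x : ℕ → ℂ := fun n => ((s n : ℤ) : ℂ) with hx
  have hcomb : ∀ n, ‖∑ i ∈ Finset.range (d+1), p.coeff i * x (n+i)‖ ≤ 1 := by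
    intro n
    set t : ℝ := ∑ j : Fin d, r j * ((s (n + j) : ℤ) : ℝ) with ht
    have hsum : ∑ i ∈ Finset.range (d+1), p.coeff i * x (n+i) = (((s (n+d) : ℤ) : ℝ) + t : ℝ) := by
      rw [Finset.sum_range_succ, hpco d, if_pos rfl, one_mul]
      have hrest : ∑ i ∈ Finset.range d, p.coeff i * x (n+i)
          = ∑ j : Fin d, ((r j : ℝ) : ℂ) * x (n + j) := by
        rw [Finset.sum_range fun i => p.coeff i * x (n+i)]
        refine Finset.sum_congr rfl fun j _ => ?_
        rw [hpco j, if_neg (by have := j.2; omega), dif_pos j.2]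
      rw [hrest, ht, hx]
      push_cast
      ring
    rw [hsum]
    rw [recur n, ht]
    rw [Complex.norm_real, Real.norm_eq_abs]
    push_cast
    rw [abs_le]
    constructor
    · have := Int.floor_le (∑ j : Fin d, r j * ((s (n + j) : ℤ) : ℝ))
      push_cast at this ⊢
      linarith
    · have := Int.lt_floor_add_one (∑ j : Fin d, r j * ((s (n + j) : ℤ) : ℝ))
      push_cast at this ⊢
      linarith
  obtain ⟨Cb, hCb⟩ := combBound d p hpm hpdeg hroots (d+1) (by omega) x 1 hcomb
  -- every component of the orbit is bounded
  have hbd : ∀ (n : ℕ) (i : Fin d), (τ^[n] z) i ∈ Finset.Icc (-⌈Cb⌉) ⌈Cb⌉ := by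
    intro n i
    have h1 : (τ^[n] z) i = s (n + i) := comp i.1 n i.2
    have h2 : |((s (n + i) : ℤ) : ℝ)| ≤ Cb := by
      have := hCb (n + i)
      rwa [hx, Complex.norm_intCast] at this
    rw [Finset.mem_Icc, h1]
    rw [abs_le] at h2
    constructor
    · have hc : ((-⌈Cb⌉ : ℤ) : ℝ) ≤ ((s (n + i) : ℤ) : ℝ) := by
        push_cast
        have := Int.le_ceil Cb
        linarith [h2.1]
      exact_mod_cast hc
    · have hc : ((s (n + i) : ℤ) : ℝ) ≤ ((⌈Cb⌉ : ℤ) : ℝ) := by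
        have := Int.le_ceil Cb
        linarith [h2.2]
      exact_mod_cast hc
  -- pigeonhole
  set g : ℕ → (Fin d → (Finset.Icc (-⌈Cb⌉) ⌈Cb⌉ : Finset ℤ)) :=
    fun n i => ⟨(τ^[n] z) i, hbd n i⟩ with hg
  obtain ⟨m, n, hmn, hgeq⟩ := Finite.exists_ne_map_eq_of_infinite g
  have heq : τ^[m] z = τ^[n] z := by
    funext i
    exact congrArg Subtype.val (congrFun hgeq i)
  rcases lt_or_gt_of_ne hmn with hlt | hlt
  · exact ⟨m, n - m, by omega, by rw [show m + (n - m) = n by omega]; exact heq.symm⟩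
  · exact ⟨n, m - n, by omega, by rw [show n + (m - n) = m by omega]; exact heq⟩
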